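/- Define the recursion z_{l,1} = (0,0) ∈ ℝ² and z_{k−1,4(s−1)+j} = z_{k,s} + rot^{(α)}(h_{k−2}^{(j)}), where h_{k−2}^{(j)} ∈ {(±h_{k−2}, ±h_{k−2})} and h_k = h/2^{l−k} with 0 < h ≤ 2^l/(√2·λ). Then for all 0 ≤ k ≤ l and 1 ≤ s ≤ 4^{l−k}, ‖z_{k,s}‖_∞ ≤ (2^l − 2^k)/(2λ). -/

import Mathlib

/-- Rotation of `ℝ²` through angle `β` about the origin. -/
noncomputable def rot (β : ℝ) (v : ℝ × ℝ) : ℝ × ℝ :=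
  (Real.cos β * v.1 - Real.sin β * v.2, Real.sin β * v.1 + Real.cos β * v.2)

/-- The four corner vectors `h_{k−2}^{(j)} ∈ {(±h_{k−2}, ±h_{k−2})}` where
`h_{k−2} = h·2^{(k−2)−l}`. -/
noncomputable def hvec (h : ℝ) (l k j : ℕ) : ℝ × ℝ :=
  let c : ℝ := h * (2 : ℝ) ^ ((k : ℤ) - 2 - (l : ℤ))
  if j = 1 then (-c, -c) else if j = 2 then (c, -c) else if j = 3 then (-c, c) else (c, c)

lemma abs_cos_add_abs_sin_le (β : ℝ) : |Real.cos β| + |Real.sin β| ≤ Real.sqrt 2 := by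
  have h1 := Real.sin_sq_add_cos_sq β
  have h2 : (0:ℝ) ≤ |Real.cos β| + |Real.sin β| := by positivity
  have h3 : (|Real.cos β| + |Real.sin β|)^2 ≤ 2 := by
    nlinarith [sq_abs (Real.cos β), sq_abs (Real.sin β), abs_nonneg (Real.cos β),
      abs_nonneg (Real.sin β), sq_nonneg (|Real.cos β| - |Real.sin β|)]
  nlinarith [Real.sq_sqrt (by norm_num : (2:ℝ) ≥ 0), Real.sqrt_nonneg 2]

lemma rot_comp_bound (β : ℝ) {c e1 e2 : ℝ} (hc : 0 ≤ c) (h1 : |e1| ≤ c) (h2 : |e2| ≤ c) :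
    |Real.cos β * e1 - Real.sin β * e2| ≤ Real.sqrt 2 * c ∧
    |Real.sin β * e1 + Real.cos β * e2| ≤ Real.sqrt 2 * c := by
  have hcs := abs_cos_add_abs_sin_le β
  have hc1 : |Real.cos β * e1| ≤ |Real.cos β| * c := by
    rw [abs_mul]; exact mul_le_mul_of_nonneg_left h1 (abs_nonneg _)
  have hc2 : |Real.cos β * e2| ≤ |Real.cos β| * c := by
    rw [abs_mul]; exact mul_le_mul_of_nonneg_left h2 (abs_nonneg _)
  have hs1 : |Real.sin β * e1| ≤ |Real.sin β| * c := by
    rw [abs_mul]; exact mul_le_mul_of_nonneg_left h1 (abs_nonneg _)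
  have hs2 : |Real.sin β * e2| ≤ |Real.sin β| * c := by
    rw [abs_mul]; exact mul_le_mul_of_nonneg_left h2 (abs_nonneg _)
  constructor
  · calc |Real.cos β * e1 - Real.sin β * e2| ≤ |Real.cos β * e1| + |Real.sin β * e2| :=
        abs_sub _ _
      _ ≤ |Real.cos β| * c + |Real.sin β| * c := add_le_add hc1 hs2
      _ = (|Real.cos β| + |Real.sin β|) * c := by ring
      _ ≤ Real.sqrt 2 * c := mul_le_mul_of_nonneg_right hcs hc
  · calc |Real.sin β * e1 + Real.cos β * e2| ≤ |Real.sin β * e1| + |Real.cos β * e2| :=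
        abs_add_le _ _
      _ ≤ |Real.sin β| * c + |Real.cos β| * c := add_le_add hs1 hc2
      _ = (|Real.cos β| + |Real.sin β|) * c := by ring
      _ ≤ Real.sqrt 2 * c := mul_le_mul_of_nonneg_right hcs hc

/-- For the recursion `z_{l,1} = (0,0)`,
`z_{k−1,4(s−1)+j} = z_{k,s} + rot^{(α)}(h_{k−2}^{(j)})` with
`0 < h ≤ 2^l/(√2·λ)`, one has `‖z_{k,s}‖_∞ ≤ (2^l − 2^k)/(2λ)` for all
`0 ≤ k ≤ l` and `1 ≤ s ≤ 4^{l−k}`. -/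
theorem z_recursion_bound (lam l : ℕ) (hlam : 0 < lam) (hl : 0 < l) (h α : ℝ)
    (hh0 : 0 < h) (hh : h ≤ 2 ^ l / (Real.sqrt 2 * lam))
    (z : ℕ → ℕ → ℝ × ℝ)
    (hz0 : z l 1 = (0, 0))
    (hrec : ∀ k s j, 1 ≤ k → k ≤ l → 1 ≤ s → s ≤ 4 ^ (l - k) → 1 ≤ j → j ≤ 4 →
      z (k - 1) (4 * (s - 1) + j) = z k s + rot α (hvec h l k j)) :
    ∀ k s, k ≤ l → 1 ≤ s → s ≤ 4 ^ (l - k) →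
      max |(z k s).1| |(z k s).2| ≤ ((2 : ℝ) ^ l - 2 ^ k) / (2 * lam) := by
  have hlam' : (0:ℝ) < lam := by exact_mod_cast hlam
  have hs2 : (0:ℝ) < Real.sqrt 2 := Real.sqrt_pos.mpr (by norm_num)
  have hs2sq : Real.sqrt 2 * Real.sqrt 2 = 2 := Real.mul_self_sqrt (by norm_num)
  have key : ∀ d, d ≤ l → ∀ s, 1 ≤ s → s ≤ 4 ^ d →
      max |(z (l - d) s).1| |(z (l - d) s).2| ≤ ((2 : ℝ) ^ l - 2 ^ (l - d)) / (2 * lam) := by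
    intro d
    induction d with
    | zero =>
      intro _ s hs1 hs2'
      interval_cases s
      simp [hz0]
    | succ d ih =>
      intro hdl s hs1 hs4
      set k := l - (d + 1) with hkdef
      have hk1 : l - d = k + 1 := by omega
      have hk1l : k + 1 ≤ l := by omega
      -- decompose s
      set q := (s - 1) / 4 with hq
      set r := (s - 1) % 4 with hr
      have hsdec : s = 4 * ((q + 1) - 1) + (r + 1) := by omega
      have hqle : q + 1 ≤ 4 ^ d := by
        have : s - 1 ≤ 4 ^ (d + 1) - 1 := by omega
        have h4 : (4:ℕ) ^ (d+1) = 4 * 4 ^ d := by ring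
        omega
      have hrle : r + 1 ≤ 4 := by omega
      have hrec' := hrec (k + 1) (q + 1) (r + 1) (by omega) hk1l (by omega) (by
          rwa [show l - (k+1) = d by omega]) (by omega) hrle
      rw [show k + 1 - 1 = k from rfl, ← hsdec] at hrec'
      have ihb := ih (by omega) (q + 1) (by omega) hqle
      rw [hk1] at ihb
      -- bound the rotation term
      set c : ℝ := h * (2 : ℝ) ^ (((k:ℤ) + 1) - 2 - (l : ℤ)) with hc
      have hc0 : 0 < c := by positivity
      have hvc : hvec h l (k + 1) (r + 1) =
          (if r + 1 = 1 then ((-c, -c) : ℝ × ℝ) else if r + 1 = 2 then (c, -c)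
            else if r + 1 = 3 then (-c, c) else (c, c)) := by
        simp only [hvec, hc]
        push_cast
        norm_num
      have habs : |(hvec h l (k + 1) (r + 1)).1| ≤ c ∧ |(hvec h l (k + 1) (r + 1)).2| ≤ c := by
        rw [hvc]
        split_ifs <;> simp [abs_of_pos hc0, abs_of_neg (neg_neg_iff_pos.mpr hc0), le_of_eq,
          abs_neg] <;> constructor <;> exact le_of_eq (abs_of_pos hc0)
      obtain ⟨hb1, hb2⟩ := rot_comp_bound (c := c) α hc0.le habs.1 habs.2
      have hrot1 : |(rot α (hvec h l (k + 1) (r + 1))).1| ≤ Real.sqrt 2 * c := hb1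
      have hrot2 : |(rot α (hvec h l (k + 1) (r + 1))).2| ≤ Real.sqrt 2 * c := hb2
      -- key numeric bound : √2 * c ≤ 2^k / (2 * lam)
      have hnum : Real.sqrt 2 * c ≤ (2:ℝ) ^ k / (2 * lam) := by
        have h1 : Real.sqrt 2 * h ≤ (2:ℝ) ^ l / lam := by
          have := mul_le_mul_of_nonneg_left hh hs2.le
          calc Real.sqrt 2 * h ≤ Real.sqrt 2 * ((2:ℝ) ^ l / (Real.sqrt 2 * lam)) := this
            _ = (2:ℝ) ^ l / lam := by
              field_simp
        have hp : (0:ℝ) < (2 : ℝ) ^ (((k:ℤ) + 1) - 2 - (l : ℤ)) := by positivity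
        have h2 : Real.sqrt 2 * c ≤ ((2:ℝ) ^ l / lam) * (2 : ℝ) ^ (((k:ℤ) + 1) - 2 - (l : ℤ)) := by
          rw [hc]
          calc Real.sqrt 2 * (h * (2 : ℝ) ^ (((k:ℤ) + 1) - 2 - (l : ℤ)))
              = (Real.sqrt 2 * h) * (2 : ℝ) ^ (((k:ℤ) + 1) - 2 - (l : ℤ)) := by ring
            _ ≤ ((2:ℝ) ^ l / lam) * (2 : ℝ) ^ (((k:ℤ) + 1) - 2 - (l : ℤ)) :=
              mul_le_mul_of_nonneg_right h1 hp.le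
        have h3 : ((2:ℝ) ^ l / lam) * (2 : ℝ) ^ (((k:ℤ) + 1) - 2 - (l : ℤ))
            = (2:ℝ) ^ k / (2 * lam) := by
          have hl2 : ((2:ℝ) ^ l) = (2:ℝ) ^ (l:ℤ) := by
            rw [zpow_natCast]
          have hk2 : ((2:ℝ) ^ k) = (2:ℝ) ^ (k:ℤ) := by
            rw [zpow_natCast]
          rw [hl2, hk2, div_mul_eq_mul_div, ← zpow_add₀ (by norm_num : (2:ℝ) ≠ 0)]
          rw [show (l:ℤ) + (((k:ℤ) + 1) - 2 - (l:ℤ)) = (k:ℤ) - 1 by ring]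
          rw [zpow_sub₀ (by norm_num : (2:ℝ) ≠ 0), zpow_one]
          field_simp
        linarith
      -- combine
      have hgoal : ∀ i : Fin 2,
          |(z k s).1| ≤ ((2:ℝ) ^ l - 2 ^ k) / (2 * lam) ∧
          |(z k s).2| ≤ ((2:ℝ) ^ l - 2 ^ k) / (2 * lam) := by
        intro _
        have hz1 : (z k s).1 = (z (k+1) (q+1)).1 + (rot α (hvec h l (k + 1) (r + 1))).1 := by
          rw [hrec']; rfl
        have hz2 : (z k s).2 = (z (k+1) (q+1)).2 + (rot α (hvec h l (k + 1) (r + 1))).2 := by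
          rw [hrec']; rfl
        have hm1 : |(z (k+1) (q+1)).1| ≤ ((2:ℝ) ^ l - 2 ^ (k+1)) / (2 * lam) :=
          le_trans (le_max_left _ _) ihb
        have hm2 : |(z (k+1) (q+1)).2| ≤ ((2:ℝ) ^ l - 2 ^ (k+1)) / (2 * lam) :=
          le_trans (le_max_right _ _) ihb
        have harith : ((2:ℝ) ^ l - 2 ^ (k+1)) / (2 * lam) + (2:ℝ) ^ k / (2 * lam)
            = ((2:ℝ) ^ l - 2 ^ k) / (2 * lam) := by
          rw [show ((2:ℝ) ^ (k+1)) = 2 * 2 ^ k from by ring]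
          field_simp
          ring
        constructor
        · rw [hz1]
          calc |(z (k+1) (q+1)).1 + (rot α (hvec h l (k + 1) (r + 1))).1|
              ≤ |(z (k+1) (q+1)).1| + |(rot α (hvec h l (k + 1) (r + 1))).1| := abs_add_le _ _
            _ ≤ ((2:ℝ) ^ l - 2 ^ (k+1)) / (2 * lam) + Real.sqrt 2 * c := add_le_add hm1 hrot1
            _ ≤ ((2:ℝ) ^ l - 2 ^ (k+1)) / (2 * lam) + (2:ℝ) ^ k / (2 * lam) := by linarith
            _ = ((2:ℝ) ^ l - 2 ^ k) / (2 * lam) := harith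
        · rw [hz2]
          calc |(z (k+1) (q+1)).2 + (rot α (hvec h l (k + 1) (r + 1))).2|
              ≤ |(z (k+1) (q+1)).2| + |(rot α (hvec h l (k + 1) (r + 1))).2| := abs_add_le _ _
            _ ≤ ((2:ℝ) ^ l - 2 ^ (k+1)) / (2 * lam) + Real.sqrt 2 * c := add_le_add hm2 hrot2
            _ ≤ ((2:ℝ) ^ l - 2 ^ (k+1)) / (2 * lam) + (2:ℝ) ^ k / (2 * lam) := by linarith
            _ = ((2:ℝ) ^ l - 2 ^ k) / (2 * lam) := harith
      exact max_le (hgoal 0).1 (hgoal 0).2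
  intro k s hkl hs1 hsle
  have h1 := key (l - k) (by omega) s hs1 hsle
  rwa [show l - (l - k) = k by omega] at h1
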